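/- For every integer m ≥ 2, ∑_{n=2}^{m} ((-1)^n / n) · n! · S(m,n) = 1, where S(m,n) is the Stirling number of the second kind; equivalently ∑_{n=2}^{m} (-1)^n (n-1)! S(m,n) = 1. -/

import Mathlib

/-- Stirling numbers of the second kind, via the recurrence
`S(m+1, n+1) = (n+1) · S(m, n+1) + S(m, n)`. -/
def stirling2 : ℕ → ℕ → ℕ
  | 0, 0 => 1
  | 0, _ + 1 => 0
  | _ + 1, 0 => 0
  | m + 1, n + 1 => (n + 1) * stirling2 m (n + 1) + stirling2 m n

lemma stirling2_eq_zero_of_lt : ∀ m n, m < n → stirling2 m n = 0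
  | 0, _+1, _ => rfl
  | m+1, n+1, h => by
      have h1 : m < n + 1 := by omega
      have h2 : m < n := by omega
      simp [stirling2, stirling2_eq_zero_of_lt m (n+1) h1,
        stirling2_eq_zero_of_lt m n h2]

lemma stirling2_zero : ∀ m, 1 ≤ m → stirling2 m 0 = 0
  | _+1, _ => rfl

lemma stirling2_one : ∀ m, 1 ≤ m → stirling2 m 1 = 1
  | 1, _ => rfl
  | m+2, _ => by
      have h1 := stirling2_one (m+1) (by omega)
      have h0 := stirling2_zero (m+1) (by omega)
      show (0+1) * stirling2 (m+1) 1 + stirling2 (m+1) 0 = 1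
      simp [h1, h0]

lemma key (m : ℕ) (hm : 1 ≤ m) :
    ∑ n ∈ Finset.Icc 1 (m+1),
      (-1:ℤ)^n * ((n-1).factorial : ℤ) * (stirling2 (m+1) n : ℤ) = 0 := by
  set g : ℕ → ℤ := fun n => (-1)^n * (n.factorial : ℤ) * (stirling2 m n : ℤ) with hg
  have h1 : ∀ j, (-1:ℤ)^(j+1) * (j.factorial : ℤ) * (stirling2 (m+1) (j+1) : ℤ)
      = g (j+1) - g j := by
    intro j
    simp only [hg, stirling2, Nat.factorial_succ]
    push_cast
    ring
  have h2 : ∑ n ∈ Finset.Icc 1 (m+1),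
      (-1:ℤ)^n * ((n-1).factorial : ℤ) * (stirling2 (m+1) n : ℤ)
      = ∑ j ∈ Finset.range (m+1),
        ((-1:ℤ)^(j+1) * (j.factorial : ℤ) * (stirling2 (m+1) (j+1) : ℤ)) := by
    rw [← Finset.Ico_add_one_right_eq_Icc, Finset.sum_Ico_eq_sum_range]
    apply Finset.sum_congr (by congr 1)
    intro j _
    have : 1 + j = j + 1 := by omega
    rw [this]
    simp
  rw [h2]
  simp only [h1]
  rw [Finset.sum_range_sub]
  have hz : stirling2 m (m+1) = 0 := stirling2_eq_zero_of_lt m (m+1) (by omega)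
  have h0 : stirling2 m 0 = 0 := stirling2_zero m hm
  simp [hg, hz, h0]

theorem stmt14 (m : ℕ) (hm : 2 ≤ m) :
    (∑ n ∈ Finset.Icc 2 m, ((-1 : ℚ) ^ n / n) * (n.factorial : ℚ) * (stirling2 m n : ℚ) = 1)
      ∧
    (∑ n ∈ Finset.Icc 2 m, ((-1 : ℤ) ^ n) * ((n - 1).factorial : ℤ) * (stirling2 m n : ℤ)
      = 1) := by
  obtain ⟨k, rfl⟩ : ∃ k, m = k + 1 := ⟨m - 1, by omega⟩
  have hk : 1 ≤ k := by omega
  have hkey := key k hk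
  have hins : Finset.Icc 1 (k+1) = insert 1 (Finset.Icc 2 (k+1)) := by
    ext x; simp; omega
  rw [hins, Finset.sum_insert (by simp)] at hkey
  have h1 : stirling2 (k+1) 1 = 1 := stirling2_one (k+1) (by omega)
  rw [h1] at hkey
  norm_num at hkey
  have hint : ∑ n ∈ Finset.Icc 2 (k+1),
      ((-1 : ℤ) ^ n) * ((n - 1).factorial : ℤ) * (stirling2 (k+1) n : ℤ) = 1 := by
    linarith [hkey]
  refine ⟨?_, hint⟩
  have : ∑ n ∈ Finset.Icc 2 (k+1),
      ((-1 : ℚ) ^ n / n) * (n.factorial : ℚ) * (stirling2 (k+1) n : ℚ)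
      = ((∑ n ∈ Finset.Icc 2 (k+1),
        ((-1 : ℤ) ^ n) * ((n - 1).factorial : ℤ) * (stirling2 (k+1) n : ℤ) : ℤ) : ℚ) := by
    push_cast
    apply Finset.sum_congr rfl
    intro n hn
    simp only [Finset.mem_Icc] at hn
    obtain ⟨j, rfl⟩ : ∃ j, n = j + 2 := ⟨n - 2, by omega⟩
    have : (j + 2) - 1 = j + 1 := by omega
    rw [this, Nat.factorial_succ (j+1)]
    push_cast
    have h2 : ((j:ℚ) + 2) ≠ 0 := by positivity
    field_simp
    ring
  rw [this, hint]
  norm_num
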